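/- Let d ≥ 2 and let u be any word of length n over the alphabet Σ_d = {1,…,d+1}. Call a decomposition of u into consecutive blocks u = B_r ⋯ B_1 (with B_1 the rightmost block) admissible if for every j the leftmost letter of B_j occurs exactly once in B_j. Then the greedy decomposition, which repeatedly removes from the current word its longest suffix whose leftmost letter occurs exactly once in that suffix, is admissible and achieves the minimal possible number of blocks among all admissible decompositions of u. -/

import Mathlib

/-- A block is *good* if it is nonempty and its leftmost letter occurs exactly once in it. -/
def GoodBlock {α : Type*} : List α → Prop
  | [] => False
  | a :: t => a ∉ t

instance {α : Type*} [DecidableEq α] : DecidablePred (GoodBlock (α := α)) := fun l =>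
  match l with
  | [] => isFalse (by simp [GoodBlock])
  | a :: t => decidable_of_iff (a ∉ t) (by simp [GoodBlock])

/-- Every word of length 1 is a good block. -/
theorem goodBlock_of_length_one {α : Type*} {l : List α} (h : l.length = 1) : GoodBlock l := by
  match l, h with
  | [a], _ => simp [GoodBlock]

theorem exists_goodBlock_drop {α : Type*} (a : α) (t : List α) :
    ∃ i, GoodBlock ((a :: t).drop i) := by
  refine ⟨(a :: t).length - 1, goodBlock_of_length_one ?_⟩
  rw [List.length_drop]
  simp

/-- The greedy decomposition: repeatedly remove from the current word its longest suffix
whose leftmost letter occurs exactly once in that suffix.  The blocks are returned in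
left-to-right order, i.e. the last entry of the returned list is the first removed suffix. -/
def greedyDecomp {α : Type*} [DecidableEq α] : List α → List (List α)
  | [] => []
  | a :: t =>
    let u := a :: t
    let i := Nat.find (exists_goodBlock_drop a t)
    greedyDecomp (u.take i) ++ [u.drop i]
  termination_by u => u.length
  decreasing_by
    simp only [List.length_take]
    have h1 : Nat.find (exists_goodBlock_drop a t) ≤ (a :: t).length - 1 :=
      Nat.find_le (goodBlock_of_length_one (by rw [List.length_drop]; simp))
    have h2 : (a :: t).length - 1 < (a :: t).length := by simp
    omega

section AuxGreedy
variable {α : Type*} [DecidableEq α]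

theorem greedyDecomp_nil : greedyDecomp ([] : List α) = [] := by
  rw [greedyDecomp]

theorem greedyDecomp_cons (a : α) (t : List α) :
    greedyDecomp (a :: t) =
      greedyDecomp ((a :: t).take (Nat.find (exists_goodBlock_drop a t))) ++
        [(a :: t).drop (Nat.find (exists_goodBlock_drop a t))] := by
  rw [greedyDecomp]

theorem find_le_length (a : α) (t : List α) :
    Nat.find (exists_goodBlock_drop a t) ≤ t.length := by
  have : GoodBlock ((a :: t).drop t.length) := by
    apply goodBlock_of_length_one
    rw [List.length_drop]; simp
  exact Nat.find_le this

theorem GoodBlock.of_prefix {v w : List α} (hw : GoodBlock w) (h : v <+: w) (hv : v ≠ []) :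
    GoodBlock v := by
  match v, w with
  | a :: s, [] => exact absurd hw (by simp [GoodBlock])
  | a :: s, b :: t =>
    obtain ⟨r, hr⟩ := h
    simp only [List.cons_append, List.cons.injEq] at hr
    obtain ⟨rfl, rfl⟩ := hr
    simp only [GoodBlock, List.mem_append] at hw ⊢
    exact fun ha => hw (Or.inl ha)

theorem greedy_flatten : ∀ (n : ℕ) (u : List α), u.length ≤ n → (greedyDecomp u).flatten = u := by
  intro n
  induction n with
  | zero =>
    rintro (_ | ⟨a, t⟩) h
    · simp [greedyDecomp_nil]
    · simp at h
  | succ n ih =>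
    rintro (_ | ⟨a, t⟩) h
    · simp [greedyDecomp_nil]
    · rw [greedyDecomp_cons, List.flatten_append]
      have hil := find_le_length a t
      have hlen : t.length ≤ n := by simpa using h
      rw [ih _ (by rw [List.length_take, List.length_cons]; omega)]
      simp [List.take_append_drop]

theorem greedy_good : ∀ (n : ℕ) (u : List α), u.length ≤ n →
    ∀ B ∈ greedyDecomp u, GoodBlock B := by
  intro n
  induction n with
  | zero =>
    rintro (_ | ⟨a, t⟩) h
    · simp [greedyDecomp_nil]
    · simp at h
  | succ n ih =>
    rintro (_ | ⟨a, t⟩) h B hB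
    · simp [greedyDecomp_nil] at hB
    · rw [greedyDecomp_cons] at hB
      have hil := find_le_length a t
      have hlen : t.length ≤ n := by simpa using h
      rcases List.mem_append.1 hB with hB | hB
      · exact ih _ (by rw [List.length_take, List.length_cons]; omega) _ hB
      · simp only [List.mem_singleton] at hB
        subst hB
        exact Nat.find_spec (exists_goodBlock_drop a t)

theorem greedy_mono : ∀ (n : ℕ) (w v : List α), w.length ≤ n → v <+: w →
    (greedyDecomp v).length ≤ (greedyDecomp w).length := by
  intro n
  induction n with
  | zero =>
    rintro (_ | ⟨a, t⟩) v h hp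
    · rw [List.prefix_nil.mp hp]
    · simp at h
  | succ n ih =>
    rintro (_ | ⟨a, t⟩) v h hp
    · rw [List.prefix_nil.mp hp]
    · match v, hp with
      | [], _ => simp [greedyDecomp_nil]
      | b :: s, hp =>
        have hb : b = a := by
          obtain ⟨r, hr⟩ := hp
          simp only [List.cons_append, List.cons.injEq] at hr
          exact hr.1
        subst hb
        have hlen : t.length ≤ n := by simpa using h
        have hslen : s.length ≤ t.length := by
          obtain ⟨r, hr⟩ := hp
          simp only [List.cons_append, List.cons.injEq] at hr
          rw [← hr.2]; simp
        have hil := find_le_length b t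
        have hi'l := find_le_length b s
        have hi'i : Nat.find (exists_goodBlock_drop b s) ≤
            Nat.find (exists_goodBlock_drop b t) := by
          set i := Nat.find (exists_goodBlock_drop b t) with hidef
          rcases le_or_gt (s.length + 1) i with hc | hc
          · omega
          · have hgood : GoodBlock ((b :: t).drop i) :=
              Nat.find_spec (exists_goodBlock_drop b t)
            have hne : (b :: s).drop i ≠ [] := by
              intro hnil
              have h2 := List.length_drop (i := i) (l := b :: s)
              rw [hnil] at h2
              simp only [List.length_nil, List.length_cons] at h2; omega
            have hpref : (b :: s).drop i <+: (b :: t).drop i := hp.drop i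
            exact Nat.find_le (hgood.of_prefix hpref hne)
        rw [greedyDecomp_cons b t, greedyDecomp_cons b s]
        simp only [List.length_append, List.length_singleton]
        have hIH : (greedyDecomp ((b :: s).take (Nat.find (exists_goodBlock_drop b s)))).length ≤
            (greedyDecomp ((b :: t).take (Nat.find (exists_goodBlock_drop b t)))).length := by
          apply ih
          · rw [List.length_take, List.length_cons]; omega
          · have h1 : (b :: s).take (Nat.find (exists_goodBlock_drop b s)) =
                (b :: t).take (Nat.find (exists_goodBlock_drop b s)) := by
              obtain ⟨r, hr⟩ := hp
              rw [← hr, List.take_append_of_le_length]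
              simp only [List.length_cons]; omega
            rw [h1]
            exact List.take_prefix_take_left hi'i
        omega

theorem greedy_min : ∀ (n : ℕ) (u : List α) (L : List (List α)), u.length ≤ n →
    L.flatten = u → (∀ B ∈ L, GoodBlock B) → (greedyDecomp u).length ≤ L.length := by
  intro n
  induction n with
  | zero =>
    rintro (_ | ⟨a, t⟩) L h _ _
    · simp [greedyDecomp_nil]
    · simp at h
  | succ n ih =>
    rintro (_ | ⟨a, t⟩) L h hL hgood
    · simp [greedyDecomp_nil]
    · rcases List.eq_nil_or_concat L with rfl | ⟨L', B, rfl⟩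
      · simp at hL
      · rw [List.concat_eq_append] at hL hgood ⊢
        have hBgood : GoodBlock B := hgood B (by simp)
        have hBne : B ≠ [] := by
          intro hnil; rw [hnil] at hBgood; exact hBgood
        rw [List.flatten_append, List.flatten_cons, List.flatten_nil, List.append_nil] at hL
        -- u = L'.flatten ++ B
        set j := L'.flatten.length with hjdef
        have hdropj : (a :: t).drop j = B := by
          rw [← hL, hjdef, List.drop_left]
        have htakej : (a :: t).take j = L'.flatten := by
          rw [← hL, hjdef, List.take_left]
        have hjlt : j < t.length + 1 := by
          rw [← List.length_cons (a := a) (as := t), ← hL, List.length_append]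
          have : 0 < B.length := List.length_pos_iff.mpr hBne
          omega
        have hij : Nat.find (exists_goodBlock_drop a t) ≤ j := by
          apply Nat.find_le
          rw [hdropj]; exact hBgood
        rw [greedyDecomp_cons]
        simp only [List.length_append, List.length_singleton, List.length_cons]
        have hmono : (greedyDecomp ((a :: t).take (Nat.find (exists_goodBlock_drop a t)))).length ≤
            (greedyDecomp ((a :: t).take j)).length := by
          apply greedy_mono (n + 1) _ _ (by rw [List.length_take]; simp at h ⊢; omega)
          exact List.take_prefix_take_left hij
        have hrec : (greedyDecomp ((a :: t).take j)).length ≤ L'.length := by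
          refine ih _ L' ?_ htakej.symm ?_
          · rw [List.length_take, List.length_cons]
            simp only [List.length_cons] at h; omega
          · intro C hC; exact hgood C (by simp [hC])
        omega

end AuxGreedy

/-- for `d ≥ 2` and any word `u` over `Σ_d = {1,…,d+1}`, the greedy decomposition
is admissible (its blocks concatenate to `u` and each block is nonempty with its leftmost letter
occurring exactly once in it), and it has the minimal number of blocks among all admissible
decompositions of `u`. -/
theorem greedyDecomp_admissible_and_minimal (d : ℕ) (hd : 2 ≤ d)
    (u : List (Fin (d + 1))) :
    (greedyDecomp u).flatten = u ∧
    (∀ B ∈ greedyDecomp u, GoodBlock B) ∧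
    (∀ L : List (List (Fin (d + 1))), L.flatten = u → (∀ B ∈ L, GoodBlock B) →
      (greedyDecomp u).length ≤ L.length) := by
  refine ⟨greedy_flatten u.length u le_rfl, greedy_good u.length u le_rfl, ?_⟩
  intro L hL hgood
  exact greedy_min u.length u L le_rfl hL hgood
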